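/- arXiv:2411.11432 — 2 statements merged into one kernel-verified Lean document; each statement's English description precedes it below -/
import Mathlib

section
/- For every natural number n > 0, there exists a paradoxical group of size n, i.e., a finite set Γ of UC-instances with exactly n elements such that BST ∪ Γ is unsatisfiable while BST ∪ Δ is satisfiable for every proper subset Δ ⊊ Γ. -/
open FirstOrder FirstOrder.Language

namespace SetParadox

/-- The language with a single binary relation symbol `∈`. -/
def L : Language := ⟨fun _ => Empty, fun n => match n with | 2 => Unit | _ => Empty⟩

/-- The membership relation symbol. -/
def memRel : L.Relations 2 := Unit.unit

/-- `memF t₁ t₂` is the atomic formula `t₁ ∈ t₂`. -/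
def memF {n : ℕ} (t₁ t₂ : L.Term (Empty ⊕ Fin n)) : L.BoundedFormula Empty n :=
  memRel.boundedFormula₂ t₁ t₂

/-- Extensionality: `∀y∀z(∀x(x∈y ↔ x∈z) → y=z)`. -/
def extAx : L.Sentence :=
  ∀' ∀' ((∀' (memF (&2) (&0) ⇔ memF (&2) (&1))) ⟹ ((&0) =' (&1)))

/-- Basic set theory: the theory whose only axiom is extensionality. -/
def BST : L.Theory := {extAx}

/-- The UC-instance `∃y∀x(x∈y ↔ φ(x))` determined by a formula `φ` with one free
variable `x` (so that `y` does not occur free in `φ`). -/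
def UCinst (φ : L.BoundedFormula Empty 1) : L.Sentence :=
  ∃' ∀' (memF (&1) (&0) ⇔ φ.liftAt 1 0)


/-- A sentence is a UC-instance if it has the form `∃y∀x(x∈y ↔ φ(x))`
where `y` does not occur free in `φ`. -/
def IsUCInstance (σ : L.Sentence) : Prop :=
  ∃ φ : L.BoundedFormula Empty 1, σ = UCinst φ

/-! ### Auxiliary syntax -/

/-- A padded false sentence: `p` universal quantifiers over `⊥`. -/
def fls : ℕ → ∀ {j : ℕ}, L.BoundedFormula Empty j
  | 0, _ => ⊥
  | p + 1, _ => ∀' (fls p)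

/-- `ch c j` says (with free variable `&j`, the last variable): there is a strict
`∋`-ascending chain of length `c` starting at `&j`. -/
def ch : ℕ → (j : ℕ) → L.BoundedFormula Empty (j + 1)
  | 0, _ => ⊤
  | c + 1, j =>
      ∃' ((memF (Term.var (Sum.inr (Fin.last (j + 1))))
            (Term.var (Sum.inr ((Fin.last j).castSucc))) ⊓
          ∼((Term.var (Sum.inr (Fin.last (j + 1))) : L.Term (Empty ⊕ Fin (j + 2))) ='
            (Term.var (Sum.inr ((Fin.last j).castSucc))))) ⊓ ch c (j + 1))

/-- `Ch c` (with one ignored free variable): there exists a strict chain of length `c`. -/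
def Ch (c : ℕ) : L.BoundedFormula Empty 1 := ∃' (ch c 1)

/-- The key formulas used in the paradoxical group. -/
def chi (n k : ℕ) : L.BoundedFormula Empty 1 :=
  if k = n - 1 then Ch (n - 1) ⟹ fls (2 * n + 3) else Ch k ⟹ Ch (k + 1)

def phi (n k : ℕ) : L.BoundedFormula Empty 1 := memF (&0) (&0) ⟹ chi n k

/-! ### Counting quantifiers (for injectivity) -/

def cnt : ∀ {j : ℕ}, L.BoundedFormula Empty j → ℕ
  | _, BoundedFormula.falsum => 0
  | _, BoundedFormula.equal _ _ => 0
  | _, BoundedFormula.rel _ _ => 0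
  | _, BoundedFormula.imp f g => cnt f + cnt g
  | _, BoundedFormula.all f => cnt f + 1

lemma cnt_imp {j} (f g : L.BoundedFormula Empty j) : cnt (f ⟹ g) = cnt f + cnt g := rfl

lemma cnt_all {j} (f : L.BoundedFormula Empty (j + 1)) : cnt (∀' f) = cnt f + 1 := rfl

lemma cnt_not {j} (f : L.BoundedFormula Empty j) : cnt (∼f) = cnt f := rfl

lemma cnt_ex {j} (f : L.BoundedFormula Empty (j + 1)) : cnt (∃' f) = cnt f + 1 := rfl

lemma cnt_inf {j} (f g : L.BoundedFormula Empty j) : cnt (f ⊓ g) = cnt f + cnt g := rfl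

lemma cnt_iff {j} (f g : L.BoundedFormula Empty j) :
    cnt (f ⇔ g) = cnt f + cnt g + (cnt g + cnt f) := rfl

lemma cnt_memF {j} (t₁ t₂ : L.Term (Empty ⊕ Fin j)) : cnt (memF t₁ t₂) = 0 := rfl

lemma cnt_top {j} : cnt (⊤ : L.BoundedFormula Empty j) = 0 := rfl

lemma cnt_bdEqual {j} (t₁ t₂ : L.Term (Empty ⊕ Fin j)) : cnt (t₁ =' t₂) = 0 := rfl

lemma cnt_castLE : ∀ {j k : ℕ} (h : j ≤ k) (f : L.BoundedFormula Empty j),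
    cnt (f.castLE h) = cnt f := by
  intro j k h f
  induction f generalizing k with
  | falsum => rfl
  | equal => rfl
  | rel => rfl
  | imp f g ih1 ih2 => simp [BoundedFormula.castLE, cnt, ih1, ih2]
  | all f ih => simp [BoundedFormula.castLE, cnt, ih]

lemma cnt_liftAt {j : ℕ} (n' m : ℕ) (f : L.BoundedFormula Empty j) :
    cnt (f.liftAt n' m) = cnt f := by
  rw [BoundedFormula.liftAt]
  induction f with
  | falsum => rfl
  | equal => rfl
  | rel => rfl
  | imp f g ih1 ih2 => simp [BoundedFormula.mapTermRel, cnt, ih1, ih2]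
  | all f ih => simp [BoundedFormula.mapTermRel, cnt, cnt_castLE, ih]

lemma cnt_fls (p : ℕ) : ∀ {j : ℕ}, cnt (fls p (j := j)) = p := by
  induction p with
  | zero => intro j; rfl
  | succ p ih => intro j; rw [fls, cnt_all, ih]

lemma cnt_ch (c : ℕ) : ∀ j, cnt (ch c j) = c := by
  induction c with
  | zero => intro j; rfl
  | succ c ih =>
    intro j
    rw [ch, cnt_ex, cnt_inf, cnt_inf, cnt_memF, cnt_not, cnt_bdEqual, ih (j + 1)]
    omega

lemma cnt_Ch (c : ℕ) : cnt (Ch c) = c + 1 := by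
  rw [Ch, cnt_ex, cnt_ch]

lemma cnt_phi (n k : ℕ) :
    cnt (phi n k) = if k = n - 1 then (n - 1) + 1 + (2 * n + 3) else (k + 1) + (k + 2) := by
  rw [phi, cnt_imp, cnt_memF, chi]
  split_ifs with h
  · rw [cnt_imp, cnt_Ch, cnt_fls]; omega
  · rw [cnt_imp, cnt_Ch, cnt_Ch]; omega

lemma cnt_UCinst (φ : L.BoundedFormula Empty 1) :
    cnt (UCinst φ) = cnt φ + cnt φ + 2 := by
  rw [UCinst, cnt_ex, cnt_all, cnt_iff, cnt_memF, cnt_liftAt]; omega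

lemma UCinst_phi_inj {n : ℕ} (hn : 0 < n) :
    ∀ k₁ < n, ∀ k₂ < n, UCinst (phi n k₁) = UCinst (phi n k₂) → k₁ = k₂ := by
  intro k₁ h₁ k₂ h₂ he
  have hc := congrArg cnt he
  rw [cnt_UCinst, cnt_UCinst, cnt_phi, cnt_phi] at hc
  split_ifs at hc <;> omega

/-! ### Semantics in a general structure -/

section Sem

variable {M : Type} [L.Structure M]

/-- `E x y` means `x ∈ y`. -/
def E (x y : M) : Prop := Structure.RelMap memRel ![x, y]

/-- `chainP c v`: there is a strict chain of length `c` above `v`. -/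
def chainP : ℕ → M → Prop
  | 0, _ => True
  | c + 1, v => ∃ w : M, E w v ∧ w ≠ v ∧ chainP c w

@[simp] lemma realize_memF {j : ℕ} (t₁ t₂ : L.Term (Empty ⊕ Fin j)) (v : Empty → M)
    (xs : Fin j → M) :
    (memF t₁ t₂).Realize v xs ↔ E (t₁.realize (Sum.elim v xs)) (t₂.realize (Sum.elim v xs)) := by
  simp [memF, E, BoundedFormula.realize_rel₂]

lemma realize_ch (c : ℕ) : ∀ (j : ℕ) (v : Empty → M) (xs : Fin (j + 1) → M),
    (ch c j).Realize v xs ↔ chainP c (xs (Fin.last j)) := by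
  induction c with
  | zero => intro j v xs; simp [ch, chainP]
  | succ c ih =>
    intro j v xs
    simp only [ch, BoundedFormula.realize_ex, BoundedFormula.realize_inf, realize_memF,
      BoundedFormula.realize_not, BoundedFormula.realize_bdEqual, ih (j + 1),
      Term.realize_var, Sum.elim_inr, Fin.snoc_last, Fin.snoc_castSucc, chainP]
    tauto

lemma realize_Ch (c : ℕ) (v : Empty → M) (xs : Fin 1 → M) :
    (Ch c).Realize v xs ↔ ∃ y : M, chainP c y := by
  simp [Ch, BoundedFormula.realize_ex, realize_ch]
  exact exists_congr fun a => by rw [show (1 : Fin 2) = Fin.last 1 from rfl, Fin.snoc_last]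

lemma realize_fls [Nonempty M] : ∀ (p : ℕ) {j : ℕ} (v : Empty → M) (xs : Fin j → M),
    ¬ (fls p).Realize v xs := by
  intro p
  induction p with
  | zero => intro j v xs h; exact h
  | succ p ih =>
    intro j v xs h
    exact ih v _ ((BoundedFormula.realize_all.1 h) (Classical.arbitrary M))

lemma realize_chi [Nonempty M] (n k : ℕ) (v : Empty → M) (xs : Fin 1 → M) :
    (chi n k).Realize v xs ↔
      (if k = n - 1 then ¬ ∃ y : M, chainP (n - 1) y
       else ((∃ y : M, chainP k y) → ∃ y : M, chainP (k + 1) y)) := by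
  unfold chi
  split_ifs with h
  · rw [BoundedFormula.realize_imp, realize_Ch]
    constructor
    · intro hi hc; exact realize_fls _ v xs (hi hc)
    · intro hc hy; exact absurd hy hc
  · rw [BoundedFormula.realize_imp, realize_Ch, realize_Ch]

lemma realize_phi [Nonempty M] (n k : ℕ) (v : Empty → M) (x : M) :
    (phi n k).Realize v (fun _ : Fin 1 => x) ↔
      (E x x →
        (if k = n - 1 then ¬ ∃ y : M, chainP (n - 1) y
         else ((∃ y : M, chainP k y) → ∃ y : M, chainP (k + 1) y))) := by
  rw [phi, BoundedFormula.realize_imp, realize_chi n k v (fun _ : Fin 1 => x)]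
  have hm : (memF (&0) (&0)).Realize v (fun _ : Fin 1 => x) ↔ E x x := by
    rw [realize_memF]
    exact Iff.rfl
  rw [hm]

lemma realize_UCinst (φ : L.BoundedFormula Empty 1) :
    M ⊨ UCinst φ ↔
      ∃ y : M, ∀ x : M, (E x y ↔ φ.Realize (default : Empty → M) (fun _ : Fin 1 => x)) := by
  unfold UCinst Sentence.Realize Formula.Realize
  rw [BoundedFormula.realize_ex]
  refine exists_congr fun y => ?_
  rw [BoundedFormula.realize_all]
  refine forall_congr' fun x => ?_
  rw [BoundedFormula.realize_iff]
  rw [realize_memF]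
  rw [BoundedFormula.realize_liftAt_one (Nat.zero_le 1)]
  have h1 : Term.realize (Sum.elim (default : Empty → M)
      (Fin.snoc (Fin.snoc (default : Fin 0 → M) y) x))
      (((Term.var ∘ Sum.inr) (1 : Fin 2)) : L.Term (Empty ⊕ Fin 2)) = x := rfl
  have h0 : Term.realize (Sum.elim (default : Empty → M)
      (Fin.snoc (Fin.snoc (default : Fin 0 → M) y) x))
      (((Term.var ∘ Sum.inr) (0 : Fin 2)) : L.Term (Empty ⊕ Fin 2)) = y := rfl
  rw [h1, h0]
  have h2 : ((Fin.snoc (Fin.snoc (default : Fin 0 → M) y) x : Fin 2 → M) ∘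
      fun i : Fin 1 => if (i : ℕ) < 0 then i.castSucc else i.succ) = fun _ : Fin 1 => x := by
    funext i
    fin_cases i
    rfl
  rw [h2]

end Sem

/-! ### The chain models -/

instance finS (m : ℕ) : L.Structure (Fin m) where
  funMap := fun {k} f _ => Empty.elim f
  RelMap := fun {k} r v =>
    match k, r, v with
    | 2, _, v => v 1 ≤ v 0
    | 0, r, _ => Empty.elim r
    | 1, r, _ => Empty.elim r
    | (_ + 3), r, _ => Empty.elim r

lemma E_fin {m : ℕ} {x y : Fin m} : E x y ↔ y ≤ x := Iff.rfl

lemma chainP_fin {m : ℕ} (c : ℕ) : ∀ x : Fin m, chainP c x ↔ (x : ℕ) + c < m := by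
  induction c with
  | zero =>
    intro x
    simpa [chainP] using x.isLt
  | succ c ih =>
    intro x
    constructor
    · rintro ⟨w, hE, hne, hc⟩
      have h1 : (x : ℕ) ≤ (w : ℕ) := E_fin.1 hE
      have h2 : (x : ℕ) ≠ (w : ℕ) := fun h => hne (Fin.ext h.symm)
      have h3 := (ih w).1 hc
      omega
    · intro h
      refine ⟨⟨(x : ℕ) + 1, by omega⟩, ?_, ?_, ?_⟩
      · exact E_fin.2 (by simp [Fin.le_def])
      · intro hh
        have := congrArg Fin.val hh
        simp at this
      · rw [ih]
        simpa using (by omega : (x : ℕ) + 1 + c < m)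

lemma fin_models_extAx (m : ℕ) : (Fin m) ⊨ extAx := by
  unfold extAx Sentence.Realize Formula.Realize
  simp only [BoundedFormula.realize_all, BoundedFormula.realize_imp,
    BoundedFormula.realize_iff, realize_memF, BoundedFormula.realize_bdEqual,
    Term.realize_var, Sum.elim_inr]
  intro y z h
  have h3 : ∀ x : Fin m,
      Term.realize (Sum.elim (default : Empty → Fin m)
        (Fin.snoc (Fin.snoc (Fin.snoc (default : Fin 0 → Fin m) y) z) x))
        (((Term.var ∘ Sum.inr) (2 : Fin 3)) : L.Term (Empty ⊕ Fin 3)) = x := fun _ => rfl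
  have h4 : ∀ x : Fin m,
      Term.realize (Sum.elim (default : Empty → Fin m)
        (Fin.snoc (Fin.snoc (Fin.snoc (default : Fin 0 → Fin m) y) z) x))
        (((Term.var ∘ Sum.inr) (0 : Fin 3)) : L.Term (Empty ⊕ Fin 3)) = y := fun _ => rfl
  have h5 : ∀ x : Fin m,
      Term.realize (Sum.elim (default : Empty → Fin m)
        (Fin.snoc (Fin.snoc (Fin.snoc (default : Fin 0 → Fin m) y) z) x))
        (((Term.var ∘ Sum.inr) (1 : Fin 3)) : L.Term (Empty ⊕ Fin 3)) = z := fun _ => rfl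
  have e0 : Term.realize (Sum.elim (default : Empty → Fin m)
      (Fin.snoc (Fin.snoc (default : Fin 0 → Fin m) y) z))
      (((Term.var ∘ Sum.inr) (0 : Fin 2)) : L.Term (Empty ⊕ Fin 2)) = y := rfl
  have e1 : Term.realize (Sum.elim (default : Empty → Fin m)
      (Fin.snoc (Fin.snoc (default : Fin 0 → Fin m) y) z))
      (((Term.var ∘ Sum.inr) (1 : Fin 2)) : L.Term (Empty ⊕ Fin 2)) = z := rfl
  rw [e0, e1]
  have hyz : ∀ x : Fin m, (E x y ↔ E x z) := by
    intro x
    have hx := h x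
    rwa [h3, h4, h5] at hx
  have h6 : z ≤ y := E_fin.1 ((hyz y).1 (E_fin.2 le_rfl))
  have h7 : y ≤ z := E_fin.1 ((hyz z).2 (E_fin.2 le_rfl))
  exact le_antisymm h7 h6

lemma chain_exists_iff {j : ℕ} (c : ℕ) :
    (∃ y : Fin (j + 1), chainP c y) ↔ c ≤ j := by
  constructor
  · rintro ⟨y, hy⟩
    have := (chainP_fin c y).1 hy
    omega
  · intro h
    exact ⟨0, (chainP_fin c 0).2 (by simp; omega)⟩

lemma fin_models_UCinst {n k j : ℕ} (hkn : k < n) (hjn : j < n) (hkj : k ≠ j) :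
    (Fin (j + 1)) ⊨ UCinst (phi n k) := by
  rw [realize_UCinst]
  refine ⟨0, fun x => ?_⟩
  have hE : E x (0 : Fin (j + 1)) := E_fin.2 (Fin.zero_le x)
  rw [realize_phi]
  refine iff_of_true hE fun _ => ?_
  split_ifs with h
  · rw [chain_exists_iff]
    omega
  · rw [chain_exists_iff, chain_exists_iff]
    intro hk
    -- k ≤ j and k ≠ j, so k + 1 ≤ j
    omega

/-! ### Main theorem -/

/-- For every `n > 0` there is a paradoxical group of size `n`: a set `Γ` of exactly `n`
UC-instances such that `BST ∪ Γ` is unsatisfiable while `BST ∪ Δ` is satisfiable for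
every proper subset `Δ ⊊ Γ`. -/
theorem exists_paradoxical_group_of_size (n : ℕ) (hn : 0 < n) :
    ∃ Γ : Finset L.Sentence, Γ.card = n ∧ (∀ σ ∈ Γ, IsUCInstance σ) ∧
      ¬ (BST ∪ (Γ : Set L.Sentence)).IsSatisfiable ∧
      ∀ Δ : Finset L.Sentence, Δ ⊂ Γ → (BST ∪ (Δ : Set L.Sentence)).IsSatisfiable := by
  classical
  refine ⟨(Finset.range n).image (fun k => UCinst (phi n k)), ?_, ?_, ?_, ?_⟩
  · rw [Finset.card_image_of_injOn, Finset.card_range]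
    intro a ha b hb hab
    rw [Finset.coe_range, Set.mem_Iio] at ha hb
    exact UCinst_phi_inj hn a ha b hb hab
  · intro σ hσ
    rw [Finset.mem_image] at hσ
    obtain ⟨k, _, rfl⟩ := hσ
    exact ⟨_, rfl⟩
  · rintro ⟨Mod⟩
    set M : Type := Mod.Carrier with hM
    have hmods : ∀ k < n, M ⊨ UCinst (phi n k) := by
      intro k hk
      apply Mod.is_model.realize_of_mem
      refine Set.mem_union_right _ ?_
      rw [Finset.mem_coe, Finset.mem_image]
      exact ⟨k, Finset.mem_range.2 hk, rfl⟩
    have hC : ∀ k < n,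
        (if k = n - 1 then ¬ ∃ y : M, chainP (n - 1) y
         else ((∃ y : M, chainP k y) → ∃ y : M, chainP (k + 1) y)) := by
      intro k hk
      obtain ⟨y, hy⟩ := (realize_UCinst (phi n k)).1 (hmods k hk)
      have hyy := hy y
      rw [realize_phi] at hyy
      by_contra hc
      tauto
    have hQ : ∀ k, k ≤ n - 1 → ∃ y : M, chainP k y := by
      intro k
      induction k with
      | zero => intro _; exact ⟨Classical.arbitrary M, trivial⟩
      | succ k ih =>
        intro hk
        have hk1 : k < n := by omega
        have hne : k ≠ n - 1 := by omega
        have := hC k hk1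
        rw [if_neg hne] at this
        exact this (ih (by omega))
    have hlast := hC (n - 1) (by omega)
    rw [if_pos rfl] at hlast
    exact hlast (hQ (n - 1) le_rfl)
  · intro Δ hΔ
    obtain ⟨σ, hσΓ, hσΔ⟩ := Finset.exists_of_ssubset hΔ
    rw [Finset.mem_image] at hσΓ
    obtain ⟨j, hj, rfl⟩ := hσΓ
    rw [Finset.mem_range] at hj
    haveI : (Fin (j + 1)) ⊨ (BST ∪ (Δ : Set L.Sentence)) := by
      rw [Theory.model_iff]
      intro σ' hσ'
      rcases hσ' with h | h
      · rw [BST, Set.mem_singleton_iff] at h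
        subst h
        exact fin_models_extAx (j + 1)
      · rw [Finset.mem_coe] at h
        have hσ'Γ := hΔ.subset h
        rw [Finset.mem_image] at hσ'Γ
        obtain ⟨k, hk, rfl⟩ := hσ'Γ
        rw [Finset.mem_range] at hk
        have hkj : k ≠ j := by
          rintro rfl
          exact hσΔ h
        exact fin_models_UCinst hk hj hkj
    exact Theory.Model.isSatisfiable (Fin (j + 1))

end SetParadox
end

section
/- For any L-sentence φ such that BST ∪ {¬φ, α} is satisfiable for some UC-instance α = ∃y∀x(x∈y ↔ ψ(x)), the UC-instance β := ∃y∀x(x∈y ↔ ((¬φ → ψ(x)) ∧ (φ → ¬x∈x))) satisfies: BST ∪ {β} is satisfiable, but BST ∪ {β, φ} is unsatisfiable. -/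
open FirstOrder FirstOrder.Language

namespace SetParadox

lemma realize_UCinst_s9 {M : Type*} [L.Structure M] (χ : L.BoundedFormula Empty 1) :
    M ⊨ UCinst χ ↔ ∃ y : M, ∀ x : M,
      (Structure.RelMap memRel ![x, y] ↔ χ.Realize default ![x]) := by
  rw [UCinst]
  simp only [Sentence.Realize, Formula.Realize, BoundedFormula.realize_ex,
    BoundedFormula.realize_all, BoundedFormula.realize_iff, memF,
    BoundedFormula.realize_rel₂, BoundedFormula.realize_liftAt_one (Nat.zero_le 1),
    Term.realize, Function.comp, Sum.elim_inr, Fin.snoc]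
  norm_num
  refine exists_congr fun y => forall_congr' fun x => iff_congr Iff.rfl ?_
  refine iff_of_eq (congrArg _ ?_)
  funext i
  fin_cases i
  simp [Fin.snoc]

lemma realize_lift_sentence {M : Type*} [L.Structure M] (φ : L.Sentence) (xs : Fin 1 → M) :
    (φ.liftAt 1 0).Realize default xs ↔ M ⊨ φ := by
  rw [BoundedFormula.realize_liftAt_one_self]
  exact iff_of_eq (congrArg _ (Subsingleton.elim _ _))

lemma realize_memF_self {M : Type*} [L.Structure M] (x : M) :
    (memF (&0) (&0)).Realize (default : Empty → M) ![x] ↔ Structure.RelMap memRel ![x, x] := by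
  simp only [memF, BoundedFormula.realize_rel₂, Term.realize, Sum.elim_inr,
    Function.comp]
  exact iff_of_eq (congrArg _ (by funext i; fin_cases i <;> rfl))

/-- For any sentence `φ` such that `BST ∪ {¬φ, α}` is satisfiable for some UC-instance
`α = ∃y∀x(x∈y ↔ ψ(x))`, the UC-instance
`β := ∃y∀x(x∈y ↔ ((¬φ → ψ(x)) ∧ (φ → ¬x∈x)))` satisfies: `BST ∪ {β}` is satisfiable
but `BST ∪ {β, φ}` is unsatisfiable. -/
theorem curry_trick (φ : L.Sentence) (ψ : L.BoundedFormula Empty 1)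
    (h : (BST ∪ {∼φ, UCinst ψ}).IsSatisfiable) :
    (BST ∪ {UCinst ((∼(φ.liftAt 1 0) ⟹ ψ) ⊓ (φ.liftAt 1 0 ⟹ ∼(memF (&0) (&0))))}).IsSatisfiable ∧
    ¬ (BST ∪ {UCinst ((∼(φ.liftAt 1 0) ⟹ ψ) ⊓ (φ.liftAt 1 0 ⟹ ∼(memF (&0) (&0)))),
        φ}).IsSatisfiable := by
  constructor
  · obtain ⟨M⟩ := h
    have hM : (M : Type _) ⊨ BST ∪ {∼φ, UCinst ψ} := M.is_model
    rw [Theory.model_union_iff, Theory.model_insert_iff, Theory.model_singleton_iff] at hM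
    obtain ⟨hBST, hnφ, hψ⟩ := hM
    have hnφ' : ¬ (M : Type _) ⊨ φ := by
      simpa [Sentence.Realize] using hnφ
    have : (M : Type _) ⊨ BST ∪
        {UCinst ((∼(φ.liftAt 1 0) ⟹ ψ) ⊓ (φ.liftAt 1 0 ⟹ ∼(memF (&0) (&0))))} := by
      rw [Theory.model_union_iff, Theory.model_singleton_iff]
      refine ⟨hBST, ?_⟩
      rw [realize_UCinst_s9] at hψ ⊢
      obtain ⟨y, hy⟩ := hψ
      refine ⟨y, fun x => ?_⟩
      simp only [BoundedFormula.realize_inf, BoundedFormula.realize_imp,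
        BoundedFormula.realize_not, realize_lift_sentence]
      have := hy x
      tauto
    exact Theory.Model.isSatisfiable (M := M)
  · rintro ⟨N⟩
    have hN : (N : Type _) ⊨ BST ∪
        {UCinst ((∼(φ.liftAt 1 0) ⟹ ψ) ⊓ (φ.liftAt 1 0 ⟹ ∼(memF (&0) (&0)))), φ} := N.is_model
    rw [Theory.model_union_iff, Theory.model_insert_iff, Theory.model_singleton_iff] at hN
    obtain ⟨hBST, hβ, hφ⟩ := hN
    rw [realize_UCinst_s9] at hβ
    obtain ⟨y, hy⟩ := hβ
    have := hy y
    simp only [BoundedFormula.realize_inf, BoundedFormula.realize_imp,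
      BoundedFormula.realize_not, realize_lift_sentence, realize_memF_self] at this
    tauto

end SetParadox
end
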